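/- For every γ > 0 and B > 0: (a) π_B is a probability measure, i.e. Σ_{i=1,2} ∫_𝕋 λ_B(k,i)⁻¹/(γ R̄) dk = 1; (b) for all i, j ∈ {1,2}, every k ∈ 𝕋 with sin(πk) ≠ 0 and every k′ ∈ 𝕋, one has γ·λ_B(k,i)·θ_{i,B}(k)²·θ_{j,B}(k′)²·R(k,k′) = λ_B(k′,j)⁻¹/(γ R̄). In particular the jump kernel P_B(k,i,dk′,j) = γ·λ_B(k,i)·θ_{i,B}(k)²·θ_{j,B}(k′)²·R(k,k′) dk′ does not depend on (k,i) and equals π_B(dk′,{j}), so that π_B is a reversible (hence invariant) probability measure for the Markov chain with transition kernel P_B. -/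

import Mathlib

open MeasureTheory Filter Topology

/-- `α̂(k) = 4 sin²(πk)`. -/
noncomputable def alphaHat (k : ℝ) : ℝ := 4 * Real.sin (Real.pi * k) ^ 2

/-- `ω_{i,B}(k) = √(α̂(k) + B²/4) ± B/2` (plus sign for `i = 1`, minus for `i = 2`). -/
noncomputable def omegaF (B : ℝ) (i : ℕ) (k : ℝ) : ℝ :=
  Real.sqrt (alphaHat k + B ^ 2 / 4) + (if i = 1 then B / 2 else -(B / 2))

/-- `θ_{i,B}(k) = √(ω_{i,B}(k)/(ω_{1,B}(k) + ω_{2,B}(k)))`. -/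
noncomputable def thetaF (B : ℝ) (i : ℕ) (k : ℝ) : ℝ :=
  Real.sqrt (omegaF B i k / (omegaF B 1 k + omegaF B 2 k))

/-- `v_B(k) = α̂′(k)/(2√(α̂(k) + B²/4))`. -/
noncomputable def vF (B : ℝ) (k : ℝ) : ℝ :=
  deriv alphaHat k / (2 * Real.sqrt (alphaHat k + B ^ 2 / 4))

/-- The scattering kernel `R(k,k′) = 16 sin²(πk) sin²(πk′)`. -/
noncomputable def Rker (k k' : ℝ) : ℝ :=
  16 * Real.sin (Real.pi * k) ^ 2 * Real.sin (Real.pi * k') ^ 2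

/-- `R(k) = ∫_𝕋 R(k,k′) dk′`, with `𝕋` identified with `[-1/2, 1/2)`. -/
noncomputable def Rone (k : ℝ) : ℝ := ∫ k' in Set.Ico (-(1 / 2) : ℝ) (1 / 2), Rker k k'

/-- `R̄ = ∫_𝕋 R(k) dk`. -/
noncomputable def Rbar : ℝ := ∫ k in Set.Ico (-(1 / 2) : ℝ) (1 / 2), Rone k

/-- `λ_B(k,i) = (γ θ_{i,B}(k)² R(k))⁻¹`. -/
noncomputable def lamF (γ B : ℝ) (i : ℕ) (k : ℝ) : ℝ :=
  (γ * thetaF B i k ^ 2 * Rone k)⁻¹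

/-- `Ψ_B(k,i) = v_B(k)·λ_B(k,i)`. -/
noncomputable def PsiF (γ B : ℝ) (i : ℕ) (k : ℝ) : ℝ := vF B k * lamF γ B i k

/-- `π_B(S)` for a subset `S` of `𝕋 × {1,2}`: the measure with density
`λ_B(k,i)⁻¹/(γ R̄)` with respect to `dk ⊗ counting`. -/
noncomputable def piMeasF (γ B : ℝ) (S : ℝ → ℕ → Prop) : ℝ :=
  ∑ i ∈ ({1, 2} : Finset ℕ),
    ∫ k in {k : ℝ | k ∈ Set.Ico (-(1 / 2) : ℝ) (1 / 2) ∧ S k i},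
      (lamF γ B i k)⁻¹ / (γ * Rbar)

section Aux

variable {γ B : ℝ}

lemma sinsq_int : ∫ k in Set.Ico (-(1 / 2) : ℝ) (1 / 2), Real.sin (Real.pi * k) ^ 2 = 1 / 2 := by
  rw [← MeasureTheory.integral_Icc_eq_integral_Ico, MeasureTheory.integral_Icc_eq_integral_Ioc,
    ← intervalIntegral.integral_of_le (by norm_num : (-(1 / 2) : ℝ) ≤ 1 / 2)]
  rw [intervalIntegral.integral_comp_mul_left (fun x => Real.sin x ^ 2) Real.pi_ne_zero]
  rw [integral_sin_sq]
  have : Real.pi * (1 / 2) = Real.pi / 2 := by ring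
  rw [this]
  have h2 : Real.pi * -(1 / 2) = -(Real.pi / 2) := by ring
  rw [h2]
  simp [Real.cos_pi_div_two, smul_eq_mul]
  field_simp

lemma Rone_eq (k : ℝ) : Rone k = 8 * Real.sin (Real.pi * k) ^ 2 := by
  unfold Rone Rker
  rw [MeasureTheory.integral_const_mul, sinsq_int]
  ring

lemma Rbar_eq : Rbar = 4 := by
  unfold Rbar
  have : (fun k : ℝ => Rone k) = fun k => 8 * Real.sin (Real.pi * k) ^ 2 := funext Rone_eq
  simp_rw [this]
  rw [MeasureTheory.integral_const_mul, sinsq_int]; norm_num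

lemma sqrt_pos' (hB : 0 < B) (k : ℝ) : 0 < Real.sqrt (alphaHat k + B ^ 2 / 4) := by
  apply Real.sqrt_pos.mpr
  have : 0 ≤ alphaHat k := by unfold alphaHat; positivity
  nlinarith

lemma half_le_sqrt (hB : 0 < B) (k : ℝ) : B / 2 ≤ Real.sqrt (alphaHat k + B ^ 2 / 4) := by
  have h0 : 0 ≤ alphaHat k := by unfold alphaHat; positivity
  have : B / 2 = Real.sqrt ((B / 2) ^ 2) := (Real.sqrt_sq (by linarith)).symm
  rw [this]
  apply Real.sqrt_le_sqrt; nlinarith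

lemma omega_nonneg (hB : 0 < B) (i : ℕ) (k : ℝ) : 0 ≤ omegaF B i k := by
  unfold omegaF
  have h1 := half_le_sqrt hB k
  split <;> linarith

lemma omega_sum (B k : ℝ) :
    omegaF B 1 k + omegaF B 2 k = 2 * Real.sqrt (alphaHat k + B ^ 2 / 4) := by
  unfold omegaF; norm_num; ring

lemma omega_sum_pos (hB : 0 < B) (k : ℝ) : 0 < omegaF B 1 k + omegaF B 2 k := by
  rw [omega_sum]; have := sqrt_pos' hB k; linarith

lemma theta_sq (hB : 0 < B) (i : ℕ) (k : ℝ) :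
    thetaF B i k ^ 2 = omegaF B i k / (omegaF B 1 k + omegaF B 2 k) :=
  Real.sq_sqrt (div_nonneg (omega_nonneg hB i k) (omega_sum_pos hB k).le)

lemma theta_sq_pos (hB : 0 < B) (i : ℕ) (k : ℝ) (hs : Real.sin (Real.pi * k) ≠ 0) :
    0 < thetaF B i k ^ 2 := by
  rw [theta_sq hB]
  apply div_pos _ (omega_sum_pos hB k)
  have hα : 0 < alphaHat k := by
    unfold alphaHat; positivity
  have hlt : B / 2 < Real.sqrt (alphaHat k + B ^ 2 / 4) := by
    have : B / 2 = Real.sqrt ((B / 2) ^ 2) := (Real.sqrt_sq (by linarith)).symm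
    rw [this]
    apply Real.sqrt_lt_sqrt (by positivity); nlinarith
  unfold omegaF
  split <;> linarith

lemma theta_sq_sum (hB : 0 < B) (k : ℝ) : thetaF B 1 k ^ 2 + thetaF B 2 k ^ 2 = 1 := by
  rw [theta_sq hB, theta_sq hB, ← add_div, div_self (omega_sum_pos hB k).ne']

lemma integrand_eq (hγ : 0 < γ) (hB : 0 < B) (i : ℕ) (k : ℝ) :
    (lamF γ B i k)⁻¹ / (γ * Rbar) = 2 * thetaF B i k ^ 2 * Real.sin (Real.pi * k) ^ 2 := by
  unfold lamF
  rw [inv_inv, Rbar_eq, Rone_eq]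
  field_simp
  ring

lemma theta_cont (hB : 0 < B) (i : ℕ) : Continuous fun k => thetaF B i k ^ 2 := by
  have hc : ∀ j : ℕ, Continuous (omegaF B j) := by
    intro j
    unfold omegaF alphaHat
    fun_prop
  have := fun k => (omega_sum_pos hB k).ne'
  simp only [theta_sq hB i]
  exact (hc i).div ((hc 1).add (hc 2)) this

end Aux

/-- For every `γ > 0` and `B > 0`:
(a) `π_B` is a probability measure: `Σ_{i=1,2} ∫_𝕋 λ_B(k,i)⁻¹/(γ R̄) dk = 1`;
(b) for all `i, j ∈ {1,2}`, all `k ∈ 𝕋` with `sin(πk) ≠ 0` and all `k′ ∈ 𝕋`,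
`γ·λ_B(k,i)·θ_{i,B}(k)²·θ_{j,B}(k′)²·R(k,k′) = λ_B(k′,j)⁻¹/(γ R̄)`; in particular the jump
kernel `P_B(k,i,dk′,j)` does not depend on `(k,i)` and equals `π_B(dk′,{j})`, so `π_B` is a
reversible (hence invariant) probability measure for the chain with kernel `P_B`. -/


theorem stmt_15 (γ B : ℝ) (hγ : 0 < γ) (hB : 0 < B) :
    (∑ i ∈ ({1, 2} : Finset ℕ),
        ∫ k in Set.Ico (-(1 / 2) : ℝ) (1 / 2), (lamF γ B i k)⁻¹ / (γ * Rbar)) = 1 ∧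
    ∀ i j : ℕ, (i = 1 ∨ i = 2) → (j = 1 ∨ j = 2) →
      ∀ k ∈ Set.Ico (-(1 / 2) : ℝ) (1 / 2), Real.sin (Real.pi * k) ≠ 0 →
        ∀ k' ∈ Set.Ico (-(1 / 2) : ℝ) (1 / 2),
          γ * lamF γ B i k * thetaF B i k ^ 2 * thetaF B j k' ^ 2 * Rker k k' =
            (lamF γ B j k')⁻¹ / (γ * Rbar) := by
  constructor
  · -- part (a)
    have hInt : ∀ i : ℕ, MeasureTheory.IntegrableOn
        (fun k => 2 * thetaF B i k ^ 2 * Real.sin (Real.pi * k) ^ 2)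
        (Set.Ico (-(1 / 2) : ℝ) (1 / 2)) := by
      intro i
      exact (((continuous_const.mul (theta_cont hB i)).mul
        (by fun_prop : Continuous fun k : ℝ => Real.sin (Real.pi * k) ^ 2)).integrableOn_Icc).mono_set
        Set.Ico_subset_Icc_self
    have hrw : ∀ i : ℕ, (∫ k in Set.Ico (-(1 / 2) : ℝ) (1 / 2), (lamF γ B i k)⁻¹ / (γ * Rbar))
        = ∫ k in Set.Ico (-(1 / 2) : ℝ) (1 / 2),
            2 * thetaF B i k ^ 2 * Real.sin (Real.pi * k) ^ 2 := by
      intro i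
      exact MeasureTheory.integral_congr_ae (Filter.Eventually.of_forall fun k =>
        integrand_eq hγ hB i k)
    rw [Finset.sum_insert (by norm_num), Finset.sum_singleton, hrw 1, hrw 2,
      ← MeasureTheory.integral_add (hInt 1) (hInt 2)]
    have : (fun k => 2 * thetaF B 1 k ^ 2 * Real.sin (Real.pi * k) ^ 2 +
        2 * thetaF B 2 k ^ 2 * Real.sin (Real.pi * k) ^ 2)
        = fun k => 2 * Real.sin (Real.pi * k) ^ 2 := by
      funext k
      have h := theta_sq_sum hB k
      nlinarith [h]
    rw [this, MeasureTheory.integral_const_mul, sinsq_int]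
    norm_num
  · -- part (b)
    intro i j hi hj k hk hs k' hk'
    have ht : 0 < thetaF B i k ^ 2 := theta_sq_pos hB i k hs
    rw [show (lamF γ B j k')⁻¹ = γ * thetaF B j k' ^ 2 * Rone k' from inv_inv _]
    unfold lamF Rker
    rw [Rbar_eq, Rone_eq, Rone_eq]
    have hs2 : Real.sin (Real.pi * k) ^ 2 ≠ 0 := pow_ne_zero 2 hs
    have ht1 : thetaF B i k ≠ 0 := fun h => by simp [h] at ht
    field_simp
    ring
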